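/- Assume p ≥ 3. Let e ≥ 0 be an integer, q = p^e, and define φ*(t) = [[1, t^q, (1/2)t^{2q}, 0], [0, 1, t^q, 0], [0, 0, 1, 0], [0, 0, 0, 1]] for t ∈ k and ω*(u) = diag(u^{3q}, u^{q}, u^{−q}, u^{−3q}) for u ∈ kˣ. Then there exists no map φ⁻ : k → SL(4,k) with the following properties: φ⁻(s+s') = φ⁻(s)·φ⁻(s') for all s,s' ∈ k; every matrix entry of φ⁻(s) is a polynomial function of s; φ⁻(s) is lower triangular for every s ∈ k; and φ*(t)·φ⁻(s) = φ⁻(s/(1+t·s)) · ω*(1+t·s) · φ*(t/(1+t·s)) for all t,s ∈ k with 1+t·s ≠ 0. -/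

import Mathlib

open Matrix

/-- The unipotent one-parameter subgroup `φ*` of form (III). -/
noncomputable def phiStarIII (k : Type*) [Field k] (q : ℕ) (t : k) : Matrix (Fin 4) (Fin 4) k :=
  !![1, t ^ q, (1 / 2 : k) * t ^ (2 * q), 0;
     0, 1, t ^ q, 0;
     0, 0, 1, 0;
     0, 0, 0, 1]

/-- The cocharacter `ω*(u) = diag(u^{3q}, u^{q}, u^{−q}, u^{−3q})`. -/
noncomputable def omegaStarI (k : Type*) [Field k] (q : ℕ) (u : kˣ) :
    Matrix (Fin 4) (Fin 4) k :=
  Matrix.diagonal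
    ![(u : k) ^ (3 * q : ℤ), (u : k) ^ (q : ℤ), (u : k) ^ (-(q : ℤ)), (u : k) ^ (-(3 * q : ℤ))]

/-- **form (III).** For `p ≥ 3`, there is no additive lower-triangular
one-parameter subgroup `φ⁻` of `SL(4,k)` with polynomial entries satisfying the opposite
Bruhat relation against `φ*` and `ω*` of form (III). -/
theorem stmt6 {k : Type*} [Field k] [IsAlgClosed k] {p : ℕ} [Fact p.Prime] [CharP k p]
    (hp : 3 ≤ p) (e : ℕ) :
    ¬∃ φm : k → SpecialLinearGroup (Fin 4) k,
      (∀ s s' : k, φm (s + s') = φm s * φm s') ∧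
        (∀ i j : Fin 4, ∃ P : Polynomial k, ∀ s : k, (φm s).1 i j = P.eval s) ∧
        (∀ (s : k) (i j : Fin 4), i < j → (φm s).1 i j = 0) ∧
        ∀ (t s : k) (h : 1 + t * s ≠ 0),
          phiStarIII k (p ^ e) t * (φm s).1 =
            (φm (s / (1 + t * s))).1 * omegaStarI k (p ^ e) (Units.mk0 (1 + t * s) h) *
              phiStarIII k (p ^ e) (t / (1 + t * s)) := by
  rintro ⟨φm, hadd, hpoly, hlow, hrel⟩
  set q : ℕ := p ^ e with hq
  have hq0 : 0 < q := pow_pos (Fact.out (p := p.Prime)).pos e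
  -- φm 0 = 1
  have h0 : φm 0 = 1 := by
    have h := hadd 0 0
    rw [add_zero] at h
    exact (mul_eq_left.mp h.symm)
  -- the diagonal entry d(s) := (φm s) 3 3
  set d : k → k := fun s => (φm s).1 3 3 with hd
  have hdadd : ∀ s s', d (s + s') = d s * d s' := by
    intro s s'
    have h := congrArg (fun M : SpecialLinearGroup (Fin 4) k => M.1 3 3) (hadd s s')
    simp only [Matrix.SpecialLinearGroup.coe_mul, SpecialLinearGroup.coe_mul, Matrix.mul_apply, Fin.sum_univ_four] at h
    rw [hlow s' 0 3 (by decide), hlow s' 1 3 (by decide), hlow s' 2 3 (by decide)] at h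
    simpa using h
  have hd0 : d 0 = 1 := by
    simp only [hd, h0]
    simp
  have hdne : ∀ s, d s ≠ 0 := by
    intro s hs
    have h := hdadd s (-s)
    rw [add_neg_cancel, hd0, hs, zero_mul] at h
    exact one_ne_zero h
  -- d is constantly 1
  have hd1 : ∀ s, d s = 1 := by
    obtain ⟨P, hP⟩ := hpoly 3 3
    have hPev : ∀ s, P.eval s = d s := fun s => (hP s).symm
    have hdeg : P.degree = 0 := by
      by_contra hne
      obtain ⟨x, hx⟩ := IsAlgClosed.exists_root P hne
      exact hdne x ((hPev x).symm.trans hx)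
    obtain ⟨c, rfl⟩ : ∃ c, P = Polynomial.C c :=
      ⟨P.coeff 0, Polynomial.eq_C_of_degree_le_zero hdeg.le⟩
    intro s
    have h1 : c = d 0 := by simpa using hPev 0
    have h2 : c = d s := by simpa using hPev s
    rw [← h2, h1, hd0]
  -- key: x ^ (3q) = 1 for all x ≠ 0
  have key : ∀ x : k, x ≠ 0 → x ^ (3 * q) = 1 := by
    intro x hx
    have hne : (1 : k) + 1 * (x - 1) ≠ 0 := by ring_nf; simpa using hx
    have h := congrFun (congrFun (hrel 1 (x - 1) hne) 3) 3
    have hx' : (1 : k) + 1 * (x - 1) = x := by ring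
    simp only [phiStarIII, omegaStarI, Matrix.mul_apply, Fin.sum_univ_four,
      Matrix.diagonal_apply, Units.val_mk0] at h
    simp only [Matrix.cons_val', Matrix.cons_val_zero, Matrix.cons_val_one, Matrix.head_cons,
      Matrix.empty_val', Matrix.cons_val_fin_one, Matrix.head_fin_const,
      Matrix.cons_val_three, Matrix.cons_val_two, Matrix.tail_cons] at h
    simp only [hx'] at h
    norm_num at h
    -- h should now say d (…) = d (…) * x ^ (-(3q))
    have h33 : (φm (x - 1)).1 3 3 = 1 := hd1 _
    have h33' : (φm ((x - 1) / x)).1 3 3 = 1 := hd1 _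
    rw [h33, h33'] at h
    simp only [Matrix.cons_val, Matrix.vecHead, Matrix.vecTail, Function.comp] at h
    norm_num at h
    -- now extract x ^ (3q) = 1
    have h2 : (x ^ (3 * (q : ℤ)))⁻¹ = 1 := by simpa using h.symm
    have h3 := inv_eq_one.mp h2
    rwa [show (3 * (q : ℤ)) = ((3 * q : ℕ) : ℤ) by push_cast; ring, zpow_natCast] at h3
  -- contradiction: infinitely many roots of X^(3q) - 1
  have hfin : {x : k | (Polynomial.X ^ (3 * q) - Polynomial.C 1 : Polynomial k).IsRoot x}.Finite :=
    Polynomial.finite_setOf_isRoot (Polynomial.X_pow_sub_C_ne_zero (by positivity) 1)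
  have hsub : ({0}ᶜ : Set k) ⊆
      {x : k | (Polynomial.X ^ (3 * q) - Polynomial.C 1 : Polynomial k).IsRoot x} := by
    intro x hx
    simp only [Set.mem_compl_iff, Set.mem_singleton_iff] at hx
    simp [Polynomial.IsRoot, key x hx]
  exact ((Set.finite_singleton (0 : k)).infinite_compl.mono hsub) hfin
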